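/- Let p be a prime, h ∈ ℕ and a ∈ ℤ. Then the generalized binomial coefficient C(a−1, p^h−1) = (a−1)(a−2)⋯(a−p^h+1)/(p^h−1)! satisfies C(a−1, p^h−1) ≡ 1 (mod p) if p^h divides a, and C(a−1, p^h−1) ≡ 0 (mod p) otherwise. -/

import Mathlib

open Finset in
lemma aux_per (p h n : ℕ) (hp : p.Prime) (hn : n < p ^ h) (x : ℤ) :
    ((Ring.choose (x + (p : ℤ) ^ h) n : ℤ) : ZMod p) = ((Ring.choose x n : ℤ) : ZMod p) := by
  have hx : x + (p : ℤ) ^ h = ((p ^ h : ℕ) : ℤ) + x := by push_cast; ring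
  rw [hx, Ring.add_choose_eq n (Commute.all _ _), Int.cast_sum]
  rw [Finset.sum_eq_single_of_mem ((0 : ℕ), n) (by simp)]
  · simp [Ring.choose_zero_right]
  · rintro ⟨i, j⟩ hb hne
    have hij : i + j = n := by simpa using hb
    have hi0 : i ≠ 0 := by rintro rfl; exact hne (by simpa using hij)
    have hine : i ≠ p ^ h := by omega
    have hdvd : p ∣ (p ^ h).choose i := Nat.Prime.dvd_choose_pow hp hi0 hine
    rw [Ring.choose_natCast]
    push_cast
    rw [show ((((p ^ h).choose i : ℕ) : ZMod p)) = 0 from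
      (ZMod.natCast_eq_zero_iff _ _).mpr hdvd]
    ring

lemma aux_shift (p h n : ℕ) (hp : p.Prime) (hn : n < p ^ h) (x : ℤ) (q : ℤ) :
    ((Ring.choose (x + q * (p : ℤ) ^ h) n : ℤ) : ZMod p) = ((Ring.choose x n : ℤ) : ZMod p) := by
  induction q using Int.induction_on with
  | zero => simp
  | succ k ih =>
      have e : x + ((k : ℤ) + 1) * (p : ℤ) ^ h = (x + k * (p : ℤ) ^ h) + (p : ℤ) ^ h := by ring
      rw [e, aux_per p h n hp hn, ih]
  | pred k ih =>
      have e : (x + (-(k : ℤ) - 1) * (p : ℤ) ^ h) + (p : ℤ) ^ h = x + (-(k : ℤ)) * (p : ℤ) ^ h := by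
        ring
      have h2 := aux_per p h n hp hn (x + (-(k : ℤ) - 1) * (p : ℤ) ^ h)
      rw [e] at h2
      rw [← h2]
      exact ih

theorem stmt17 (p : ℕ) (hp : p.Prime) (h : ℕ) (a : ℤ) :
    Ring.choose (a - 1) (p ^ h - 1) ≡
      (if (p : ℤ) ^ h ∣ a then 1 else 0) [ZMOD (p : ℤ)] := by
  rw [← ZMod.intCast_eq_intCast_iff]
  have hph : (0 : ℤ) < (p : ℤ) ^ h := by exact_mod_cast pow_pos (Int.natCast_pos.mpr hp.pos) h
  set n := p ^ h - 1 with hn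
  have hnlt : n < p ^ h := by
    have : 1 ≤ p ^ h := Nat.one_le_pow _ _ hp.pos
    omega
  have ha : a - 1 = (a % (p : ℤ) ^ h - 1) + (a / (p : ℤ) ^ h) * (p : ℤ) ^ h := by
    have := Int.mul_ediv_add_emod a ((p : ℤ) ^ h)
    linarith
  rw [ha, aux_shift p h n hp hnlt]
  by_cases hd : (p : ℤ) ^ h ∣ a
  · rw [if_pos hd]
    have hr : a % (p : ℤ) ^ h = 0 := Int.emod_eq_zero_of_dvd hd
    rw [hr]
    have : Ring.choose ((0 : ℤ) - 1) n = (-1) ^ n := by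
      rw [Ring.choose]
      rw [show (0 : ℤ) - 1 - n + 1 = -(n : ℤ) by ring]
      exact Ring.multichoose_neg_self n
    rw [this]
    rcases hp.eq_two_or_odd' with h2 | hodd
    · subst h2
      push_cast
      rw [show ((-1 : ZMod 2)) = 1 by decide, one_pow]
    · have : Even n := by
        have : Odd (p ^ h) := hodd.pow
        rcases this with ⟨k, hk⟩
        exact ⟨k, by omega⟩
      rw [this.neg_one_pow]
  · rw [if_neg hd]
    have hr0 : a % (p : ℤ) ^ h ≠ 0 := fun hc => hd (Int.dvd_of_emod_eq_zero hc)
    have hrpos : 0 < a % (p : ℤ) ^ h :=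
      lt_of_le_of_ne (Int.emod_nonneg a (ne_of_gt hph)) (Ne.symm hr0)
    have hrlt : a % (p : ℤ) ^ h < (p : ℤ) ^ h := Int.emod_lt_of_pos a hph
    set m := (a % (p : ℤ) ^ h - 1).toNat with hm
    have hmc : (a % (p : ℤ) ^ h - 1) = (m : ℤ) := by
      rw [hm, Int.toNat_of_nonneg (by omega)]
    rw [hmc, Ring.choose_natCast]
    have hmn : m < n := by
      have h1 : (m : ℤ) < (p : ℤ) ^ h - 1 := by omega
      have h2 : ((p ^ h : ℕ) : ℤ) = (p : ℤ) ^ h := by push_cast; ring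
      have : 2 ≤ p ^ h := by
        by_contra hc
        interval_cases h' : p ^ h <;> omega
      omega
    rw [Nat.choose_eq_zero_of_lt hmn]
    simp
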